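/- Let α ∈ (0,1), δ > 0, and β₀ > 0 with β₀·δ < log(1/α), and set z = β₀·δ / log(1/α) ∈ (0,1). Define β_{k+1} = β_k·log(1/α) / ( log(1/α) − β_k·δ ) recursively, and let K ∈ ℕ satisfy K ≥ log(z) / log(1−z). If β_k·δ < log(1/α) for all k < K (so the recursion is well defined up to step K), then β_K ≥ log(1/α)/δ. -/

import Mathlib

set_option autoImplicit false

/-- Bound on the number of grid points: if `z = β₀δ/log(1/α) ∈ (0,1)`, the recursion
`β_{k+1} = β_k log(1/α) / (log(1/α) − β_k δ)` is well defined up to step `K`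
(i.e. `β_k δ < log(1/α)` for all `k < K`), and `K ≥ log z / log(1−z)`, then
`β_K ≥ log(1/α)/δ`. -/
theorem evar_grid_size_bound (α δ β₀ : ℝ) (hα : α ∈ Set.Ioo (0 : ℝ) 1) (hδ : 0 < δ)
    (hβ₀ : 0 < β₀) (hsmall : β₀ * δ < Real.log (1 / α))
    (B : ℕ → ℝ) (hB0 : B 0 = β₀) (K : ℕ)
    (hrec : ∀ k < K, B (k + 1) = B k * Real.log (1 / α) / (Real.log (1 / α) - B k * δ))
    (hdom : ∀ k < K, B k * δ < Real.log (1 / α))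
    (hK : Real.log (β₀ * δ / Real.log (1 / α)) /
        Real.log (1 - β₀ * δ / Real.log (1 / α)) ≤ (K : ℝ)) :
    Real.log (1 / α) / δ ≤ B K := by
  obtain ⟨hα0, hα1⟩ := hα
  set L := Real.log (1 / α) with hLdef
  have hL : 0 < L := Real.log_pos (one_lt_one_div hα0 hα1)
  set z := β₀ * δ / L with hzdef
  have hz0 : 0 < z := div_pos (mul_pos hβ₀ hδ) hL
  have hz1 : z < 1 := (div_lt_one hL).mpr hsmall
  -- Step 1: K + 1 ≥ 1/z, i.e. 1 ≤ z * (K+1)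
  have hKz : 1 ≤ z * ((K : ℝ) + 1) := by
    by_contra h
    push_neg at h
    have h1z : 0 < 1 - z := by linarith
    have hbern : 1 - (K : ℝ) * z ≤ (1 - z) ^ K := by
      have := one_add_mul_le_pow (a := -z) (by linarith) K
      simpa [sub_eq_add_neg, mul_comm] using this
    have hzlt : z < (1 - z) ^ K := by nlinarith
    have hlog : Real.log z < (K : ℝ) * Real.log (1 - z) := by
      calc Real.log z < Real.log ((1 - z) ^ K) := Real.log_lt_log hz0 hzlt
        _ = (K : ℝ) * Real.log (1 - z) := by rw [Real.log_pow]
    have hneg : Real.log (1 - z) < 0 := Real.log_neg h1z (by linarith)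
    have : (K : ℝ) < Real.log z / Real.log (1 - z) :=
      (lt_div_iff_of_neg hneg).mpr hlog
    exact absurd hK (by linarith)
  -- Step 2: invariant of the recursion
  have key : ∀ k ≤ K, 0 < B k ∧ 0 < 1 - (k : ℝ) * z ∧ B k * δ * (1 - (k : ℝ) * z) = z * L := by
    intro k hk
    induction k with
    | zero =>
      refine ⟨by rw [hB0]; exact hβ₀, by norm_num, ?_⟩
      rw [hB0]
      simp only [Nat.cast_zero, zero_mul, sub_zero, mul_one]
      rw [hzdef, div_mul_cancel₀ _ hL.ne']
    | succ k ih =>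
      obtain ⟨hBk, hkz, heq⟩ := ih (Nat.le_of_succ_le hk)
      have hkK : k < K := hk
      have hD : 0 < L - B k * δ := sub_pos.mpr (hdom k hkK)
      have hrecn := hrec k hkK
      have hBk1 : 0 < B (k + 1) := by
        rw [hrecn]; exact div_pos (mul_pos hBk hL) hD
      have heq1 : B (k + 1) * δ * (1 - ((k : ℝ) + 1) * z) = z * L := by
        rw [hrecn, div_mul_eq_mul_div, div_mul_eq_mul_div, div_eq_iff hD.ne']
        linear_combination L * heq
      have hkz1 : 0 < 1 - ((k : ℝ) + 1) * z := by
        have hzL : 0 < z * L := mul_pos hz0 hL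
        nlinarith [mul_pos hBk1 hδ]
      push_cast
      exact ⟨hBk1, hkz1, heq1⟩
  obtain ⟨hBK, hKz', heqK⟩ := key K le_rfl
  have hle : 1 - (K : ℝ) * z ≤ z := by nlinarith
  rw [div_le_iff₀ hδ]
  nlinarith [mul_pos hBK hδ, mul_pos hz0 hL]
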